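/- Let f₁ : ℝ^m → ℝ and f₂ : ℝ^d × ℝ → ℝ^m be differentiable, and define f(x;t) := f₁(f₂(x;t)). Suppose the Jacobian ∇ₓf₂(x;t) ∈ ℝ^{m×d} has full row rank with minimum singular value σ_min(x;t) > 0. Then |∇ₜf(x;t)| / ‖∇ₓf(x;t)‖ ≤ ‖∇ₜf₂(x;t)‖ / σ_min(x;t) whenever ∇ₓf(x;t) ≠ 0. -/

import Mathlib

/-- Proposition 2: for f(x;t) = f₁(f₂(x;t)) with row-full-rank Jacobian of f₂ in x,
|∇ₜf| / ‖∇ₓf‖ ≤ ‖∇ₜf₂‖ / σ_min. -/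
theorem stmt_7 {d m : ℕ}
    (f₁ : EuclideanSpace ℝ (Fin m) → ℝ)
    (f₂ : EuclideanSpace ℝ (Fin d) → ℝ → EuclideanSpace ℝ (Fin m))
    (x : EuclideanSpace ℝ (Fin d)) (t : ℝ)
    (g₁ : EuclideanSpace ℝ (Fin m))
    (hg₁ : HasGradientAt f₁ g₁ (f₂ x t))
    (J : EuclideanSpace ℝ (Fin d) →L[ℝ] EuclideanSpace ℝ (Fin m))
    (hJ : HasFDerivAt (fun y => f₂ y t) J x)
    (vt : EuclideanSpace ℝ (Fin m))
    (hvt : HasDerivAt (fun s => f₂ x s) vt t)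
    (σmin : ℝ) (hσpos : 0 < σmin)
    (hσ : ∀ w : EuclideanSpace ℝ (Fin m),
      σmin * ‖w‖ ≤ ‖ContinuousLinearMap.adjoint J w‖)
    (hne : ContinuousLinearMap.adjoint J g₁ ≠ 0) :
    |(inner ℝ g₁ vt : ℝ)| / ‖ContinuousLinearMap.adjoint J g₁‖ ≤ ‖vt‖ / σmin := by
  have hnorm : (0:ℝ) < ‖ContinuousLinearMap.adjoint J g₁‖ := norm_pos_iff.mpr hne
  have hcs : |(inner ℝ g₁ vt : ℝ)| ≤ ‖g₁‖ * ‖vt‖ := abs_real_inner_le_norm g₁ vt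
  have hσg := hσ g₁
  rw [div_le_div_iff₀ hnorm hσpos]
  nlinarith [norm_nonneg vt, norm_nonneg g₁, abs_nonneg (inner ℝ g₁ vt : ℝ)]
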